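/- Let γ be the smallest positive solution of tan(γ) = 1/γ, and let λ = 2/γ². Then the function b(x) = cos(γx) satisfies λ·b(x) = ∫_{-1}^{x} (2 + t - x)·b(t) dt + ∫_{x}^{1} (2 - t + x)·b(t) dt for all x ∈ [-1, 1]. -/

import Mathlib

lemma hasDeriv_plus (γ c : ℝ) (hγ : γ ≠ 0) (t : ℝ) :
    HasDerivAt (fun t => (c + t) * Real.sin (γ * t) / γ + Real.cos (γ * t) / γ ^ 2)
      ((c + t) * Real.cos (γ * t)) t := by
  have hs : HasDerivAt (fun t => Real.sin (γ * t)) (Real.cos (γ * t) * γ) t := by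
    simpa [Function.comp_def] using (Real.hasDerivAt_sin (γ * t)).comp t ((hasDerivAt_id t).const_mul γ)
  have hc : HasDerivAt (fun t => Real.cos (γ * t)) (-Real.sin (γ * t) * γ) t := by
    simpa [Function.comp_def] using (Real.hasDerivAt_cos (γ * t)).comp t ((hasDerivAt_id t).const_mul γ)
  have h1 : HasDerivAt (fun t : ℝ => (c + t)) 1 t := by
    simpa using (hasDerivAt_id t).const_add c
  have := ((h1.mul hs).div_const γ).add (hc.div_const (γ ^ 2))
  refine this.congr_deriv ?_
  field_simp
  ring

lemma hasDeriv_minus (γ c : ℝ) (hγ : γ ≠ 0) (t : ℝ) :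
    HasDerivAt (fun t => (c - t) * Real.sin (γ * t) / γ - Real.cos (γ * t) / γ ^ 2)
      ((c - t) * Real.cos (γ * t)) t := by
  have hs : HasDerivAt (fun t => Real.sin (γ * t)) (Real.cos (γ * t) * γ) t := by
    simpa [Function.comp_def] using (Real.hasDerivAt_sin (γ * t)).comp t ((hasDerivAt_id t).const_mul γ)
  have hc : HasDerivAt (fun t => Real.cos (γ * t)) (-Real.sin (γ * t) * γ) t := by
    simpa [Function.comp_def] using (Real.hasDerivAt_cos (γ * t)).comp t ((hasDerivAt_id t).const_mul γ)
  have h1 : HasDerivAt (fun t : ℝ => (c - t)) (-1) t := by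
    simpa using (hasDerivAt_id t).const_sub c
  have := ((h1.mul hs).div_const γ).sub (hc.div_const (γ ^ 2))
  refine this.congr_deriv ?_
  field_simp
  ring

theorem cos_eigenfunction (γ : ℝ) (hγpos : 0 < γ) (hγ : Real.tan γ = 1 / γ)
    (hmin : ∀ γ' : ℝ, 0 < γ' → Real.tan γ' = 1 / γ' → γ ≤ γ') :
    ∀ x ∈ Set.Icc (-1 : ℝ) 1,
      (2 / γ ^ 2) * Real.cos (γ * x) =
        (∫ t in (-1 : ℝ)..x, (2 + t - x) * Real.cos (γ * t)) +
          ∫ t in x..(1 : ℝ), (2 - t + x) * Real.cos (γ * t) := by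
  intro x hx
  have hγ0 : γ ≠ 0 := ne_of_gt hγpos
  have hcos : Real.cos γ ≠ 0 := by
    intro h
    rw [Real.tan_eq_sin_div_cos, h, div_zero] at hγ
    exact one_div_ne_zero hγ0 hγ.symm
  have hsin : Real.sin γ * γ = Real.cos γ := by
    rw [Real.tan_eq_sin_div_cos] at hγ
    field_simp at hγ
    linarith
  have h1 : (∫ t in (-1 : ℝ)..x, (2 + t - x) * Real.cos (γ * t)) =
      (((2 - x) + x) * Real.sin (γ * x) / γ + Real.cos (γ * x) / γ ^ 2)
        - (((2 - x) + (-1)) * Real.sin (γ * (-1)) / γ + Real.cos (γ * (-1)) / γ ^ 2) := by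
    have := intervalIntegral.integral_eq_sub_of_hasDerivAt
      (f := fun t => ((2 - x) + t) * Real.sin (γ * t) / γ + Real.cos (γ * t) / γ ^ 2)
      (f' := fun t => ((2 - x) + t) * Real.cos (γ * t)) (a := (-1 : ℝ)) (b := x)
      (fun t _ => hasDeriv_plus γ (2 - x) hγ0 t)
      (Continuous.intervalIntegrable (by continuity) _ _)
    rw [← this]
    congr 1
    ext t
    ring
  have h2 : (∫ t in x..(1 : ℝ), (2 - t + x) * Real.cos (γ * t)) =
      (((2 + x) - 1) * Real.sin (γ * 1) / γ - Real.cos (γ * 1) / γ ^ 2)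
        - (((2 + x) - x) * Real.sin (γ * x) / γ - Real.cos (γ * x) / γ ^ 2) := by
    have := intervalIntegral.integral_eq_sub_of_hasDerivAt
      (f := fun t => ((2 + x) - t) * Real.sin (γ * t) / γ - Real.cos (γ * t) / γ ^ 2)
      (f' := fun t => ((2 + x) - t) * Real.cos (γ * t)) (a := x) (b := (1 : ℝ))
      (fun t _ => hasDeriv_minus γ (2 + x) hγ0 t)
      (Continuous.intervalIntegrable (by continuity) _ _)
    rw [← this]
    congr 1
    ext t
    ring
  rw [h1, h2]
  simp only [mul_neg_one, mul_one, Real.sin_neg, Real.cos_neg]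
  field_simp
  linear_combination (-2) * hsin
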